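/- Let K ≥ 1 and l ≥ 0 be integers and let w, b be real numbers. Then Ĩ_{C₀}(K,l;w,b) = Ĩ_{C₇}(K,l;w,b) − Ĩ_{\overline{C₁}}(K,l;w,b); explicitly, K^{−l} ∫_0^K t^l exp(−2πwt − 2πib t²) dt = K^{−l} e^{−iπ(l+1)/4} ∫_0^{√2 K} t^l exp(−2πw e^{−iπ/4} t − 2πb t²) dt + i K^{−l} ∫_0^K (K−it)^l exp(−2πw(K−it) − 2πib(K−it)²) dt. -/

import Mathlib

open MeasureTheory Set

noncomputable def ffI (l : ℕ) (w b : ℝ) (z : ℂ) : ℂ :=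
  z ^ l * Complex.exp (-2 * (Real.pi : ℂ) * (w : ℂ) * z -
    2 * (Real.pi : ℂ) * Complex.I * (b : ℂ) * z ^ 2)

noncomputable def fdI (l : ℕ) (w b : ℝ) (z : ℂ) : ℂ :=
  (l : ℂ) * z ^ (l - 1) *
      Complex.exp (-2 * (Real.pi : ℂ) * (w : ℂ) * z -
        2 * (Real.pi : ℂ) * Complex.I * (b : ℂ) * z ^ 2) +
    z ^ l *
      (Complex.exp (-2 * (Real.pi : ℂ) * (w : ℂ) * z -
        2 * (Real.pi : ℂ) * Complex.I * (b : ℂ) * z ^ 2) *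
        (-2 * (Real.pi : ℂ) * (w : ℂ) - 2 * (Real.pi : ℂ) * Complex.I * (b : ℂ) * (2 * z ^ 1)))

lemma ffI_hasDerivAt (l : ℕ) (w b : ℝ) (z : ℂ) : HasDerivAt (ffI l w b) (fdI l w b z) z := by
  have ha : HasDerivAt (fun z : ℂ => -2 * (Real.pi : ℂ) * (w : ℂ) * z)
      (-2 * (Real.pi : ℂ) * (w : ℂ)) z := by
    simpa using (hasDerivAt_id z).const_mul (-2 * (Real.pi : ℂ) * (w : ℂ))
  have hb : HasDerivAt (fun z : ℂ => 2 * (Real.pi : ℂ) * Complex.I * (b : ℂ) * z ^ 2)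
      (2 * (Real.pi : ℂ) * Complex.I * (b : ℂ) * (2 * z ^ 1)) z := by
    have := (hasDerivAt_pow 2 z).const_mul (2 * (Real.pi : ℂ) * Complex.I * (b : ℂ))
    norm_num at this ⊢
    exact this
  have h1 := (ha.sub hb).cexp
  have h2 := (hasDerivAt_pow l z).mul h1
  exact h2

@[fun_prop]
lemma ffI_cont (l : ℕ) (w b : ℝ) : Continuous (ffI l w b) := by
  unfold ffI; fun_prop

@[fun_prop]
lemma fdI_cont (l : ℕ) (w b : ℝ) : Continuous (fdI l w b) := by
  unfold fdI; fun_prop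

lemma triangle_swap {g : ℝ → ℝ → ℂ} (hg : Continuous fun p : ℝ × ℝ => g p.1 p.2)
    {K : ℝ} (hK : 0 ≤ K) :
    (∫ t in (0:ℝ)..K, ∫ s in t..K, g s t) = ∫ s in (0:ℝ)..K, ∫ t in (0:ℝ)..s, g s t := by
  have hS : MeasurableSet {p : ℝ × ℝ | p.1 < p.2} :=
    measurableSet_lt measurable_fst measurable_snd
  set F : ℝ × ℝ → ℂ := ({p : ℝ × ℝ | p.1 < p.2}).indicator (fun p => g p.2 p.1) with hF
  have hgc : Continuous fun p : ℝ × ℝ => g p.2 p.1 := hg.comp continuous_swap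
  have hFint : Integrable (Function.uncurry fun t s => F (t, s))
      ((volume.restrict (Ioc (0:ℝ) K)).prod (volume.restrict (Ioc (0:ℝ) K))) := by
    have : (Function.uncurry fun t s => F (t, s)) = F := rfl
    rw [this, Measure.prod_restrict]
    have hI : IntegrableOn (fun p : ℝ × ℝ => g p.2 p.1) (Ioc (0:ℝ) K ×ˢ Ioc (0:ℝ) K)
        (volume.prod volume) := by
      rw [← Measure.volume_eq_prod]
      exact (hgc.continuousOn.integrableOn_compact (isCompact_Icc.prod isCompact_Icc)).mono_set
        (Set.prod_mono Ioc_subset_Icc_self Ioc_subset_Icc_self)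
    exact hI.indicator hS
  have L : (∫ t in (0:ℝ)..K, ∫ s in t..K, g s t)
      = ∫ t in Ioc (0:ℝ) K, ∫ s in Ioc (0:ℝ) K, F (t, s) := by
    rw [intervalIntegral.integral_of_le hK]
    refine setIntegral_congr_fun measurableSet_Ioc (fun t ht => ?_)
    rw [intervalIntegral.integral_of_le ht.2]
    have h1 : ∀ s : ℝ, F (t, s) = (Ioi t).indicator (fun s => g s t) s := by
      intro s
      by_cases h : t < s <;> simp [hF, Set.indicator_apply, h]
    simp_rw [h1]
    rw [setIntegral_indicator measurableSet_Ioi, Ioc_inter_Ioi,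
      sup_of_le_right ht.1.le]
  have R : (∫ s in (0:ℝ)..K, ∫ t in (0:ℝ)..s, g s t)
      = ∫ s in Ioc (0:ℝ) K, ∫ t in Ioc (0:ℝ) K, F (t, s) := by
    rw [intervalIntegral.integral_of_le hK]
    refine setIntegral_congr_fun measurableSet_Ioc (fun s hs => ?_)
    rw [intervalIntegral.integral_of_le hs.1.le]
    have h1 : ∀ t : ℝ, F (t, s) = (Iio s).indicator (fun t => g s t) t := by
      intro t
      by_cases h : t < s <;> simp [hF, Set.indicator_apply, h]
    simp_rw [h1]
    rw [setIntegral_indicator measurableSet_Iio]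
    have h2 : Ioc (0:ℝ) K ∩ Iio s = Ioo 0 s := by
      ext x
      constructor
      · rintro ⟨⟨hx0, _⟩, hxs⟩; exact ⟨hx0, hxs⟩
      · rintro ⟨hx0, hxs⟩; exact ⟨⟨hx0, hxs.le.trans hs.2⟩, hxs⟩
    rw [h2, ← integral_Ioc_eq_integral_Ioo]
  rw [L, R]
  exact MeasureTheory.integral_integral_swap hFint

/-- Cauchy's theorem for `z^l exp(−2πwz − 2πib z²)` on the triangle with
vertices `0, K, K−iK`: `Ĩ_{C₀}(K,l;w,b) = Ĩ_{C₇}(K,l;w,b) − Ĩ_{overline{C₁}}(K,l;w,b)`. -/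
theorem ItC0_eq_ItC7_sub_ItC1bar (K : ℕ) (hK : 1 ≤ K) (l : ℕ) (w b : ℝ) :
    ((K : ℂ) ^ l)⁻¹ * ∫ t in (0 : ℝ)..(K : ℝ), (t : ℂ) ^ l *
        Complex.exp (-2 * (Real.pi : ℂ) * (w : ℂ) * (t : ℂ) -
          2 * (Real.pi : ℂ) * Complex.I * (b : ℂ) * (t : ℂ) ^ 2)
      = ((K : ℂ) ^ l)⁻¹ * Complex.exp (-(Complex.I) * (Real.pi : ℂ) * ((l : ℂ) + 1) / 4) *
          (∫ t in (0 : ℝ)..(Real.sqrt 2 * K), (t : ℂ) ^ l *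
            Complex.exp (-2 * (Real.pi : ℂ) * (w : ℂ) *
                Complex.exp (-(Complex.I) * (Real.pi : ℂ) / 4) * (t : ℂ) -
              2 * (Real.pi : ℂ) * (b : ℂ) * (t : ℂ) ^ 2))
        + Complex.I * ((K : ℂ) ^ l)⁻¹ *
          ∫ t in (0 : ℝ)..(K : ℝ), ((K : ℂ) - Complex.I * (t : ℂ)) ^ l *
            Complex.exp (-2 * (Real.pi : ℂ) * (w : ℂ) *
                ((K : ℂ) - Complex.I * (t : ℂ)) -
              2 * (Real.pi : ℂ) * Complex.I * (b : ℂ) *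
                ((K : ℂ) - Complex.I * (t : ℂ)) ^ 2) := by
  have hK0 : (0:ℝ) ≤ (K:ℝ) := Nat.cast_nonneg K
  -- the three basic integrals
  set A : ℂ := ∫ t in (0:ℝ)..(K:ℝ), ffI l w b (t:ℂ) with hA
  set D : ℂ := ∫ t in (0:ℝ)..(K:ℝ), ffI l w b ((t:ℂ) - Complex.I * (t:ℂ)) with hD
  set V : ℂ := ∫ t in (0:ℝ)..(K:ℝ), ffI l w b ((K:ℂ) - Complex.I * (t:ℂ)) with hV
  have contV : Continuous fun t : ℝ => ffI l w b ((K:ℂ) - Complex.I * (t:ℂ)) :=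
    (ffI_cont l w b).comp (by continuity)
  have contD : Continuous fun t : ℝ => ffI l w b ((t:ℂ) - Complex.I * (t:ℂ)) :=
    (ffI_cont l w b).comp (by continuity)
  have contA : Continuous fun t : ℝ => ffI l w b (t:ℂ) :=
    (ffI_cont l w b).comp (by continuity)
  -- FTC along horizontal segments at height -t
  have step1 : ∀ t : ℝ, (∫ s in t..(K:ℝ), fdI l w b ((s:ℂ) - Complex.I * (t:ℂ)))
      = ffI l w b ((K:ℂ) - Complex.I * (t:ℂ)) - ffI l w b ((t:ℂ) - Complex.I * (t:ℂ)) := by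
    intro t
    have hd : ∀ s : ℝ, HasDerivAt (fun s : ℝ => ffI l w b ((s:ℂ) - Complex.I * (t:ℂ)))
        (fdI l w b ((s:ℂ) - Complex.I * (t:ℂ))) s := by
      intro s
      have hin : HasDerivAt (fun z : ℂ => z - Complex.I * (t:ℂ)) 1 (s:ℂ) :=
        (hasDerivAt_id _).sub_const _
      have h1 := (ffI_hasDerivAt l w b ((s:ℂ) - Complex.I * (t:ℂ))).comp (s:ℂ) hin
      simpa [Function.comp] using h1.comp_ofReal
    have h := intervalIntegral.integral_eq_sub_of_hasDerivAt (a := t) (b := (K:ℝ))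
      (fun s _ => hd s)
      ((Continuous.intervalIntegrable (by fun_prop :
        Continuous fun s : ℝ => fdI l w b ((s:ℂ) - Complex.I * (t:ℂ))) _ _))
    push_cast at h
    exact h
  -- FTC along vertical segments below s
  have step2 : ∀ s : ℝ, (∫ t in (0:ℝ)..s, fdI l w b ((s:ℂ) - Complex.I * (t:ℂ)))
      = Complex.I * ffI l w b ((s:ℂ) - Complex.I * (s:ℂ)) - Complex.I * ffI l w b (s:ℂ) := by
    intro s
    have hd : ∀ t : ℝ, HasDerivAt
        (fun t : ℝ => Complex.I * ffI l w b ((s:ℂ) - Complex.I * (t:ℂ)))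
        (fdI l w b ((s:ℂ) - Complex.I * (t:ℂ))) t := by
      intro t
      have hin : HasDerivAt (fun z : ℂ => (s:ℂ) - Complex.I * z) (-Complex.I) (t:ℂ) := by
        simpa using ((hasDerivAt_id ((t:ℝ):ℂ)).const_mul Complex.I).const_sub (s:ℂ)
      have h1 := ((ffI_hasDerivAt l w b ((s:ℂ) - Complex.I * (t:ℂ))).comp ((t:ℝ):ℂ)
        hin).const_mul Complex.I
      have h3 : Complex.I * (fdI l w b ((s:ℂ) - Complex.I * (t:ℂ)) * -Complex.I)
          = fdI l w b ((s:ℂ) - Complex.I * (t:ℂ)) := by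
        linear_combination (-(fdI l w b ((s:ℂ) - Complex.I * (t:ℂ)))) * Complex.I_sq
      rw [h3] at h1
      simpa [Function.comp] using h1.comp_ofReal
    have h := intervalIntegral.integral_eq_sub_of_hasDerivAt (a := (0:ℝ)) (b := s)
      (fun t _ => hd t)
      ((Continuous.intervalIntegrable (by fun_prop :
        Continuous fun t : ℝ => fdI l w b ((s:ℂ) - Complex.I * (t:ℂ))) _ _))
    norm_num at h
    exact h
  -- combine: V - D = I*D - I*A
  have hrel : V - D = Complex.I * D - Complex.I * A := by
    have e1 : V - D = ∫ t in (0:ℝ)..(K:ℝ),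
        (ffI l w b ((K:ℂ) - Complex.I * (t:ℂ)) - ffI l w b ((t:ℂ) - Complex.I * (t:ℂ))) :=
      (intervalIntegral.integral_sub (contV.intervalIntegrable _ _)
        (contD.intervalIntegrable _ _)).symm
    have e2 : (∫ t in (0:ℝ)..(K:ℝ),
        (ffI l w b ((K:ℂ) - Complex.I * (t:ℂ)) - ffI l w b ((t:ℂ) - Complex.I * (t:ℂ))))
        = ∫ t in (0:ℝ)..(K:ℝ), ∫ s in t..(K:ℝ), fdI l w b ((s:ℂ) - Complex.I * (t:ℂ)) :=
      intervalIntegral.integral_congr (fun t _ => (step1 t).symm)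
    have hgc : Continuous fun p : ℝ × ℝ => fdI l w b ((p.1:ℂ) - Complex.I * (p.2:ℂ)) :=
      (fdI_cont l w b).comp (by continuity)
    rw [e1, e2, triangle_swap hgc hK0, intervalIntegral.integral_congr (fun s _ => step2 s),
      intervalIntegral.integral_sub
        (f := fun t : ℝ => Complex.I * ffI l w b ((t:ℂ) - Complex.I * (t:ℂ)))
        (g := fun t : ℝ => Complex.I * ffI l w b (t:ℂ))
        ((continuous_const.mul contD).intervalIntegrable _ _)
        ((continuous_const.mul contA).intervalIntegrable _ _),
      intervalIntegral.integral_const_mul, intervalIntegral.integral_const_mul]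
  -- the diagonal integral
  set E8 : ℂ := Complex.exp (-(Complex.I) * (Real.pi : ℂ) / 4) with hE8def
  have hE8 : (Real.sqrt 2 : ℂ) * E8 = 1 - Complex.I := by
    rw [hE8def, show (-(Complex.I) * (Real.pi:ℂ) / 4) = ((-(Real.pi/4) : ℝ) : ℂ) * Complex.I by
      push_cast; ring, Complex.exp_mul_I, ← Complex.ofReal_cos, ← Complex.ofReal_sin]
    rw [Real.cos_neg, Real.sin_neg, Real.cos_pi_div_four, Real.sin_pi_div_four]
    have h2c : (Real.sqrt 2 : ℂ) * (Real.sqrt 2 : ℂ) = 2 := by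
      rw [← Complex.ofReal_mul, Real.mul_self_sqrt (by norm_num : (0:ℝ) ≤ 2)]
      norm_num
    push_cast
    linear_combination (1/2 - Complex.I/2) * h2c
  have hE8sq : Complex.I * E8 ^ 2 = 1 := by
    rw [hE8def, ← Complex.exp_nat_mul]
    rw [show ((2:ℕ):ℂ) * (-(Complex.I) * (Real.pi:ℂ) / 4)
        = ((-(Real.pi/2) : ℝ) : ℂ) * Complex.I by push_cast; ring, Complex.exp_mul_I,
      ← Complex.ofReal_cos, ← Complex.ofReal_sin, Real.cos_neg, Real.sin_neg,
      Real.cos_pi_div_two, Real.sin_pi_div_two]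
    push_cast
    linear_combination -Complex.I_sq
  have hE7 : Complex.exp (-(Complex.I) * (Real.pi : ℂ) * ((l:ℂ) + 1) / 4) = E8 ^ (l + 1) := by
    rw [hE8def, ← Complex.exp_nat_mul]
    congr 1
    push_cast
    ring
  set hfun : ℝ → ℂ := fun t => (t : ℂ) ^ l *
      Complex.exp (-2 * (Real.pi : ℂ) * (w : ℂ) * E8 * (t : ℂ) -
        2 * (Real.pi : ℂ) * (b : ℂ) * (t : ℂ) ^ 2) with hfundef
  have hfun_cont : Continuous hfun := by rw [hfundef]; fun_prop
  have hsub : (∫ t in (0:ℝ)..(Real.sqrt 2 * K), hfun t)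
      = (Real.sqrt 2 : ℝ) • ∫ u in (0:ℝ)..(K:ℝ), hfun (Real.sqrt 2 * u) := by
    have h0 : Real.sqrt 2 * (0:ℝ) = 0 := mul_zero _
    calc (∫ t in (0:ℝ)..(Real.sqrt 2 * K), hfun t)
        = ∫ t in (Real.sqrt 2 * 0)..(Real.sqrt 2 * K), hfun t := by rw [h0]
      _ = (Real.sqrt 2 : ℝ) • ∫ u in (0:ℝ)..(K:ℝ), hfun (Real.sqrt 2 * u) :=
        (intervalIntegral.smul_integral_comp_mul_left hfun _).symm
  have hpoint : ∀ u : ℝ, Complex.exp (-(Complex.I) * (Real.pi : ℂ) * ((l:ℂ) + 1) / 4) *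
      ((Real.sqrt 2 : ℂ) * hfun (Real.sqrt 2 * u))
      = (1 - Complex.I) * ffI l w b ((u:ℂ) - Complex.I * (u:ℂ)) := by
    intro u
    have harg : -2 * (Real.pi : ℂ) * (w : ℂ) * E8 * ((Real.sqrt 2 : ℂ) * (u:ℂ)) -
        2 * (Real.pi : ℂ) * (b : ℂ) * ((Real.sqrt 2 : ℂ) * (u:ℂ)) ^ 2
        = -2 * (Real.pi : ℂ) * (w : ℂ) * ((u:ℂ) - Complex.I * (u:ℂ)) -
          2 * (Real.pi : ℂ) * Complex.I * (b : ℂ) * ((u:ℂ) - Complex.I * (u:ℂ)) ^ 2 := by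
      rw [show ((u:ℂ) - Complex.I * (u:ℂ)) = (1 - Complex.I) * (u:ℂ) by ring, ← hE8]
      linear_combination (2 * (Real.pi:ℂ) * (b:ℂ) * (Real.sqrt 2 : ℂ)^2 * (u:ℂ)^2) * hE8sq
    rw [hfundef]
    simp only [ffI]
    push_cast
    rw [harg, hE7]
    rw [show ((u:ℂ) - Complex.I * (u:ℂ)) = (1 - Complex.I) * (u:ℂ) by ring, ← hE8]
    ring
  have hC7 : Complex.exp (-(Complex.I) * (Real.pi : ℂ) * ((l:ℂ) + 1) / 4) *
      (∫ t in (0:ℝ)..(Real.sqrt 2 * K), hfun t) = (1 - Complex.I) * D := by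
    rw [hsub, Complex.real_smul, hD]
    rw [show Complex.exp (-(Complex.I) * (Real.pi : ℂ) * ((l:ℂ) + 1) / 4) *
        ((Real.sqrt 2 : ℂ) * ∫ u in (0:ℝ)..(K:ℝ), hfun (Real.sqrt 2 * u))
        = ∫ u in (0:ℝ)..(K:ℝ), Complex.exp (-(Complex.I) * (Real.pi : ℂ) * ((l:ℂ) + 1) / 4) *
          ((Real.sqrt 2 : ℂ) * hfun (Real.sqrt 2 * u)) by
      rw [intervalIntegral.integral_const_mul, intervalIntegral.integral_const_mul]]
    rw [intervalIntegral.integral_congr (fun u _ => hpoint u),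
      intervalIntegral.integral_const_mul]
  -- final assembly
  have hmain : A = Complex.exp (-(Complex.I) * (Real.pi : ℂ) * ((l:ℂ) + 1) / 4) *
      (∫ t in (0:ℝ)..(Real.sqrt 2 * K), hfun t) + Complex.I * V := by
    linear_combination (-1 : ℂ) * hC7 + (-Complex.I) * hrel + (A - D) * Complex.I_sq
  show ((K : ℂ) ^ l)⁻¹ * A
      = ((K : ℂ) ^ l)⁻¹ * Complex.exp (-(Complex.I) * (Real.pi : ℂ) * ((l:ℂ) + 1) / 4) *
        (∫ t in (0:ℝ)..(Real.sqrt 2 * K), hfun t) + Complex.I * ((K : ℂ) ^ l)⁻¹ * V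
  rw [hmain]
  ring
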